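/- Let G be a group that is not amenable, acting by homeomorphisms on a nonempty compact Hausdorff space X such that the action is minimal (every orbit is dense). Suppose there exists a unital positive G-equivariant linear map ψ : ℓ∞(G) → C(X,ℝ). Then X has no isolated points. -/

import Mathlib

/-- `H` admits a left-invariant mean on `ℓ∞(H)` (the bounded real functions on the discrete
group `H`), i.e. `H` is amenable. -/
def HasLeftInvariantMean (H : Type*) [Group H] [TopologicalSpace H] [DiscreteTopology H] :
    Prop :=
  ∃ m : BoundedContinuousFunction H ℝ →ₗ[ℝ] ℝ,
    m 1 = 1 ∧ (∀ f : BoundedContinuousFunction H ℝ, (∀ t, 0 ≤ f t) → 0 ≤ m f) ∧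
    ∀ (r : H) (f : BoundedContinuousFunction H ℝ),
      m (f.compContinuous ⟨fun t => r⁻¹ * t, continuous_of_discreteTopology⟩) = m f

/-- If a non-amenable group `G` acts minimally on a nonempty compact Hausdorff space `X`
and there is a unital positive `G`-equivariant linear map `ψ : ℓ∞(G) → C(X,ℝ)`, then `X`
has no isolated points. -/
theorem stmt_7 {G X : Type*} [Group G] [TopologicalSpace G] [DiscreteTopology G]
    [TopologicalSpace X] [CompactSpace X] [T2Space X] [Nonempty X]
    [MulAction G X] [ContinuousConstSMul G X]
    (hG : ¬ HasLeftInvariantMean G)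
    (hmin : ∀ y : X, Dense (Set.range fun s : G => s • y))
    (ψ : BoundedContinuousFunction G ℝ →ₗ[ℝ] C(X, ℝ))
    (hψ1 : ψ 1 = 1)
    (hψpos : ∀ h : BoundedContinuousFunction G ℝ, (∀ t, 0 ≤ h t) → ∀ x : X, 0 ≤ ψ h x)
    (hψeq : ∀ (s : G) (h : BoundedContinuousFunction G ℝ) (x : X),
      ψ (h.compContinuous ⟨fun t => s⁻¹ * t, continuous_of_discreteTopology⟩) x
        = ψ h (s⁻¹ • x)) :
    ∀ x : X, ¬ IsOpen ({x} : Set X) := by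
  intro x hx
  apply hG
  -- every singleton is open
  have hsing : ∀ y : X, IsOpen ({y} : Set X) := by
    intro y
    obtain ⟨z, ⟨s, hs⟩, hz⟩ :=
      (hmin y).exists_mem_open hx ⟨x, rfl⟩
    have hy : y = s⁻¹ • x := by
      have h1 : s • y = x := by simpa using hs.trans hz
      rw [← h1, inv_smul_smul]
    have : ({y} : Set X) = (Homeomorph.smul (s⁻¹ : G) (α := X)) '' {x} := by
      simp [hy]
    rw [this]
    exact (Homeomorph.smul (s⁻¹ : G) (α := X)).isOpenMap _ hx
  have : DiscreteTopology X := discreteTopology_iff_isOpen_singleton.mpr hsing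
  have : Finite X := finite_of_compact_of_discrete
  have : Fintype X := Fintype.ofFinite X
  have hcard : (0 : ℝ) < (Fintype.card X : ℝ) := by
    exact_mod_cast Fintype.card_pos
  refine ⟨{ toFun := fun h => (Fintype.card X : ℝ)⁻¹ * ∑ y : X, ψ h y
            map_add' := ?_
            map_smul' := ?_ }, ?_, ?_, ?_⟩
  · intro h h'
    simp only [map_add, ContinuousMap.add_apply, Finset.sum_add_distrib]
    ring
  · intro c h
    simp only [map_smul, ContinuousMap.smul_apply, smul_eq_mul, ← Finset.mul_sum,
      RingHom.id_apply]
    ring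
  · simp only [LinearMap.coe_mk, AddHom.coe_mk, hψ1, ContinuousMap.one_apply,
      Finset.sum_const, Finset.card_univ, nsmul_eq_mul, mul_one]
    field_simp
  · intro f hf
    simp only [LinearMap.coe_mk, AddHom.coe_mk]
    exact mul_nonneg (inv_nonneg.mpr hcard.le)
      (Finset.sum_nonneg fun y _ => hψpos f hf y)
  · intro r f
    simp only [LinearMap.coe_mk, AddHom.coe_mk]
    congr 1
    calc ∑ y : X, ψ (f.compContinuous ⟨fun t => r⁻¹ * t, continuous_of_discreteTopology⟩) y
        = ∑ y : X, ψ f (r⁻¹ • y) := by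
          exact Finset.sum_congr rfl fun y _ => hψeq r f y
      _ = ∑ y : X, ψ f y := by
          exact Fintype.sum_equiv (MulAction.toPerm (r⁻¹ : G)) _ _ fun y => rfl
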